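/- Let A and B be unital C*-algebras and let Φ : A → B be a completely positive linear map with operator norm ‖Φ‖ ≤ 1. Then for every a ∈ A one has the Schwarz inequality Φ(a)*Φ(a) ≤ Φ(a*a) in B. -/

import Mathlib

open scoped Matrix

/-- A map between star rings is *completely positive* if, for every `n`, applying it
entrywise to `n × n` matrices sends positive elements (i.e. those of the form `Nᴴ * N`)
of the matrix ring over the domain to positive elements of the matrix ring over the
codomain. -/
def CompletelyPositive {A B : Type*} [NonUnitalNonAssocSemiring A] [StarRing A]
    [NonUnitalNonAssocSemiring B] [StarRing B] (Φ : A → B) : Prop :=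
  ∀ n : ℕ, ∀ M : Matrix (Fin n) (Fin n) A,
    (∃ N : Matrix (Fin n) (Fin n) A, M = Nᴴ * N) →
      ∃ P : Matrix (Fin n) (Fin n) B, M.map Φ = Pᴴ * P

/-- **The Schwarz inequality.** If `Φ : A → B` is a completely positive linear map between
unital C*-algebras with `‖Φ‖ ≤ 1`, then `Φ(a)* Φ(a) ≤ Φ(a* a)` for every `a ∈ A`. -/
theorem schwarz_inequality_of_completelyPositive {A B : Type*}
    [NormedRing A] [StarRing A] [CStarRing A] [CompleteSpace A]
    [NormedAlgebra ℂ A] [StarModule ℂ A]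
    [NormedRing B] [StarRing B] [CStarRing B] [CompleteSpace B]
    [NormedAlgebra ℂ B] [StarModule ℂ B] [PartialOrder B] [StarOrderedRing B]
    (Φ : A →L[ℂ] B) (hnorm : ‖Φ‖ ≤ 1) (hcp : CompletelyPositive (⇑Φ)) (a : A) :
    star (Φ a) * Φ a ≤ Φ (star a * a) := by
  letI : CStarAlgebra B := ⟨⟩
  obtain ⟨P, hP⟩ := hcp 2 !![1, a; star a, star a * a] ⟨!![1, a; 0, 0], by
    ext i j
    fin_cases i <;> fin_cases j <;>
      simp [Matrix.mul_apply, Fin.sum_univ_two]⟩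
  set p := P 0 0 with hp
  set q := P 1 0 with hq
  set r := P 0 1 with hr
  set s := P 1 1 with hs
  have h11 : Φ 1 = star p * p + star q * q := by
    have := congrFun (congrFun hP 0) 0
    simpa [Matrix.mul_apply, Fin.sum_univ_two, Matrix.map_apply] using this
  have h12 : Φ a = star p * r + star q * s := by
    have := congrFun (congrFun hP 0) 1
    simpa [Matrix.mul_apply, Fin.sum_univ_two, Matrix.map_apply] using this
  have h22 : Φ (star a * a) = star r * r + star s * s := by
    have := congrFun (congrFun hP 1) 1
    simpa [Matrix.mul_apply, Fin.sum_univ_two, Matrix.map_apply] using this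
  have hpos : (0 : B) ≤ Φ 1 := h11 ▸ add_nonneg (star_mul_self_nonneg p) (star_mul_self_nonneg q)
  have hle1 : Φ 1 ≤ 1 := by
    rw [← CStarAlgebra.norm_le_one_iff_of_nonneg _ hpos]
    calc ‖Φ 1‖ ≤ ‖Φ‖ * ‖(1 : A)‖ := Φ.le_opNorm 1
    _ ≤ 1 * 1 := by
          have hA1 : ‖(1 : A)‖ ≤ 1 := by
            rcases subsingleton_or_nontrivial A with h | h
            · simp [Subsingleton.elim (1 : A) 0]
            · exact le_of_eq norm_one
          exact mul_le_mul hnorm hA1 (norm_nonneg _) zero_le_one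
    _ = 1 := one_mul 1
  set b := Φ a with hb
  have key : (0 : B) ≤ star (r - p * b) * (r - p * b) + star (s - q * b) * (s - q * b) :=
    add_nonneg (star_mul_self_nonneg _) (star_mul_self_nonneg _)
  have expand : star (r - p * b) * (r - p * b) + star (s - q * b) * (s - q * b)
      = (star r * r + star s * s) - star b * (star p * r + star q * s)
        - ((star r * p + star s * q) * b) + star b * (star p * p + star q * q) * b := by
    simp only [star_sub, star_mul]
    noncomm_ring
  have hconj : star b * (star p * p + star q * q) * b ≤ star b * b := by
    calc star b * (star p * p + star q * q) * b = star b * Φ 1 * b := by rw [h11]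
    _ ≤ star b * 1 * b := star_left_conjugate_le_conjugate hle1 b
    _ = star b * b := by rw [mul_one]
  have hstar : (star r * p + star s * q) * b = star b * b := by
    have : star r * p + star s * q = star (star p * r + star q * s) := by
      simp [star_add, star_mul]
    rw [this, ← h12]
  rw [expand, ← h12, hstar] at key
  have k2 : (0 : B) ≤ star r * r + star s * s - star b * b := by
    calc (0 : B) ≤ star r * r + star s * s - star b * b - star b * b
          + star b * (star p * p + star q * q) * b := key
    _ ≤ star r * r + star s * s - star b * b - star b * b + star b * b :=
          add_le_add_right hconj _
    _ = star r * r + star s * s - star b * b := by abel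
  rw [h22]
  exact sub_nonneg.mp k2
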